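/- (Exact norm for s ≤ r.) Let C be a d×d doubly stochastic real matrix and let r, s be exponents with 1 ≤ s ≤ r < ∞. Then ‖C‖_{r→s} = d^{1/s − 1/r}; in particular the norm coincides with that of the d×d matrix with all entries equal to 1/d. -/

import Mathlib

open scoped BigOperators

/-- The vector `p`-norm of a complex vector, for a real exponent `p`. -/
noncomputable def vecPNorm {n : Type*} [Fintype n] (p : ℝ) (v : n → ℂ) : ℝ :=
  (∑ i, ‖v i‖ ^ p) ^ (1 / p)

/-- The `(r → s)` operator norm of a complex matrix, for real exponents. -/
noncomputable def matPNorm {m n : Type*} [Fintype m] [Fintype n] (r s : ℝ)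
    (C : Matrix m n ℂ) : ℝ :=
  sSup {t : ℝ | ∃ φ : n → ℂ, φ ≠ 0 ∧ t = vecPNorm s (C.mulVec φ) / vecPNorm r φ}

open Finset in
/-- ℓs–ℓr norm comparison via Jensen. -/
lemma sum_rpow_comparison {d : ℕ} (hd : 0 < d) (b : Fin d → ℝ) (hb : ∀ i, 0 ≤ b i)
    {r s : ℝ} (hs : 1 ≤ s) (hsr : s ≤ r) :
    (∑ i, b i ^ s) ^ (1 / s) ≤ (d : ℝ) ^ (1 / s - 1 / r) * (∑ i, b i ^ r) ^ (1 / r) := by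
  have hs0 : (0:ℝ) < s := lt_of_lt_of_le one_pos hs
  have hr0 : (0:ℝ) < r := lt_of_lt_of_le hs0 hsr
  have hd0 : (0:ℝ) < d := Nat.cast_pos.mpr hd
  set S := ∑ i, b i ^ s with hS
  set R := ∑ i, b i ^ r with hR
  have hSnn : 0 ≤ S := Finset.sum_nonneg fun i _ => Real.rpow_nonneg (hb i) _
  have hRnn : 0 ≤ R := Finset.sum_nonneg fun i _ => Real.rpow_nonneg (hb i) _
  have hjen : ((d:ℝ)⁻¹ * S) ^ (r / s) ≤ (d:ℝ)⁻¹ * R := by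
    have hw : ∀ i ∈ univ (α := Fin d), (0:ℝ) ≤ (d:ℝ)⁻¹ := fun _ _ => by positivity
    have hw' : ∑ _i : Fin d, (d:ℝ)⁻¹ = 1 := by
      simp [Finset.sum_const, Finset.card_univ]
      field_simp
    have hz : ∀ i ∈ univ (α := Fin d), (0:ℝ) ≤ b i ^ s := fun i _ => Real.rpow_nonneg (hb i) _
    have hp : (1:ℝ) ≤ r / s := (one_le_div hs0).mpr hsr
    have := Real.rpow_arith_mean_le_arith_mean_rpow univ (fun _ => (d:ℝ)⁻¹)
      (fun i => b i ^ s) hw hw' hz hp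
    simpa [← Finset.mul_sum, ← Real.rpow_mul (hb _), mul_div_cancel₀ r (ne_of_gt hs0),
      ← Real.rpow_natCast] using this
  have h2 : (d:ℝ)⁻¹ * S ≤ ((d:ℝ)⁻¹ * R) ^ (s / r) := by
    have h := Real.rpow_le_rpow (Real.rpow_nonneg (by positivity) _) hjen
      (le_of_lt (div_pos hs0 hr0))
    rwa [← Real.rpow_mul (by positivity), div_mul_div_comm,
      mul_comm r s, div_self (by positivity), Real.rpow_one] at h
  have h3 : S ≤ (d:ℝ) ^ (1 - s/r) * R ^ (s/r) := by
    calc S = d * ((d:ℝ)⁻¹ * S) := by field_simp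
    _ ≤ d * (((d:ℝ)⁻¹ * R) ^ (s/r)) := by
        exact mul_le_mul_of_nonneg_left h2 hd0.le
    _ = d / (d:ℝ) ^ (s/r) * R ^ (s/r) := by
        rw [Real.mul_rpow (by positivity) hRnn, Real.inv_rpow hd0.le]; ring
    _ = (d:ℝ) ^ (1 - s/r) * R ^ (s/r) := by
        rw [Real.rpow_sub hd0, Real.rpow_one]
  calc S ^ (1/s) ≤ ((d:ℝ) ^ (1 - s/r) * R ^ (s/r)) ^ (1/s) :=
        Real.rpow_le_rpow hSnn h3 (by positivity)
  _ = (d:ℝ) ^ (1/s - 1/r) * R ^ (1/r) := by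
      rw [Real.mul_rpow (by positivity) (Real.rpow_nonneg hRnn _),
        ← Real.rpow_mul hd0.le, ← Real.rpow_mul hRnn]
      have e1 : (1 - s/r) * (1/s) = 1/s - 1/r := by field_simp
      have e2 : (s/r) * (1/s) = 1/r := by field_simp
      rw [e1, e2]

/-- **Exact norm for `s ≤ r`.** For any `d×d` doubly stochastic matrix `C` and
exponents `1 ≤ s ≤ r < ∞`, `‖C‖_{r→s} = d^(1/s - 1/r)`, the MUB value. -/
theorem matPNorm_doublyStochastic_eq_of_le {d : ℕ} (hd : 0 < d)
    (C : Matrix (Fin d) (Fin d) ℝ)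
    (hnn : ∀ i j, 0 ≤ C i j) (hrow : ∀ i, ∑ j, C i j = 1) (hcol : ∀ j, ∑ i, C i j = 1)
    (r s : ℝ) (hs : 1 ≤ s) (hsr : s ≤ r) :
    matPNorm r s (C.map Complex.ofReal) = (d : ℝ) ^ (1 / s - 1 / r) := by
  have hs0 : (0:ℝ) < s := lt_of_lt_of_le one_pos hs
  have hr0 : (0:ℝ) < r := lt_of_lt_of_le hs0 hsr
  have hd0 : (0:ℝ) < d := Nat.cast_pos.mpr hd
  set M := (d:ℝ) ^ (1/s - 1/r) with hM
  apply IsGreatest.csSup_eq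
  constructor
  · -- M is attained by the all-ones vector
    refine ⟨fun _ => 1, ?_, ?_⟩
    · intro h
      have := congrFun h ⟨0, hd⟩
      simp at this
    · have hmv : ∀ i, (C.map Complex.ofReal).mulVec (fun _ => 1) i = 1 := by
        intro i
        simp only [Matrix.mulVec, dotProduct, Matrix.map_apply, mul_one]
        rw [← Complex.ofReal_sum, hrow i, Complex.ofReal_one]
      have hnorm : ∀ p : ℝ, vecPNorm p ((C.map Complex.ofReal).mulVec (fun _ => 1))
          = (d:ℝ) ^ (1/p) := by
        intro p
        simp [vecPNorm, hmv, Real.one_rpow, Finset.sum_const, Finset.card_univ]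
      have hnorm1 : ∀ p : ℝ, vecPNorm p (fun _ : Fin d => (1:ℂ)) = (d:ℝ) ^ (1/p) := by
        intro p
        simp [vecPNorm, Real.one_rpow, Finset.sum_const, Finset.card_univ]
      rw [hnorm s, hnorm1 r, hM, ← Real.rpow_sub hd0]
  · -- M is an upper bound
    rintro t ⟨φ, hφ, rfl⟩
    have hNφ : 0 < vecPNorm r φ := by
      obtain ⟨j, hj⟩ : ∃ j, φ j ≠ 0 := by
        by_contra h; push_neg at h; exact hφ (funext h)
      have : 0 < ∑ i, ‖φ i‖ ^ r := by
        apply Finset.sum_pos'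
        · exact fun i _ => Real.rpow_nonneg (norm_nonneg _) _
        · exact ⟨j, Finset.mem_univ j, Real.rpow_pos_of_pos (norm_pos_iff.mpr hj) _ ⟩
      exact Real.rpow_pos_of_pos this _
    rw [div_le_iff₀ hNφ]
    have hbound : ∀ i, ‖(C.map Complex.ofReal).mulVec φ i‖ ≤ ∑ j, C i j * ‖φ j‖ := by
      intro i
      simp only [Matrix.mulVec, dotProduct, Matrix.map_apply]
      refine le_trans (norm_sum_le _ _) (le_of_eq ?_)
      refine Finset.sum_congr rfl fun j _ => ?_
      rw [norm_mul, Complex.norm_real, Real.norm_eq_abs, abs_of_nonneg (hnn i j)]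
    have hA : ∑ i, ‖(C.map Complex.ofReal).mulVec φ i‖ ^ r ≤ ∑ j, ‖φ j‖ ^ r := by
      calc ∑ i, ‖(C.map Complex.ofReal).mulVec φ i‖ ^ r
          ≤ ∑ i, (∑ j, C i j * ‖φ j‖) ^ r := by
            refine Finset.sum_le_sum fun i _ => ?_
            exact Real.rpow_le_rpow (norm_nonneg _) (hbound i) hr0.le
        _ ≤ ∑ i, ∑ j, C i j * ‖φ j‖ ^ r := by
            refine Finset.sum_le_sum fun i _ => ?_
            exact Real.rpow_arith_mean_le_arith_mean_rpow Finset.univ (C i) (fun j => ‖φ j‖)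
              (fun j _ => hnn i j) (hrow i) (fun j _ => norm_nonneg _) (le_trans hs hsr)
        _ = ∑ j, (∑ i, C i j) * ‖φ j‖ ^ r := by
            rw [Finset.sum_comm]
            exact Finset.sum_congr rfl fun j _ => (Finset.sum_mul _ _ _).symm
        _ = ∑ j, ‖φ j‖ ^ r := by simp [hcol]
    calc vecPNorm s ((C.map Complex.ofReal).mulVec φ)
        ≤ M * (∑ i, ‖(C.map Complex.ofReal).mulVec φ i‖ ^ r) ^ (1/r) :=
          sum_rpow_comparison hd _ (fun i => norm_nonneg _) hs hsr
      _ ≤ M * vecPNorm r φ := by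
          refine mul_le_mul_of_nonneg_left ?_ (Real.rpow_nonneg hd0.le _)
          exact Real.rpow_le_rpow (Finset.sum_nonneg fun i _ =>
            Real.rpow_nonneg (norm_nonneg _) _) hA (by positivity)
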